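/- Let G and H be graphs with adjacency matrices A and B, and let B = ∑_{s=1}^{q} μ_s F_s be the spectral decomposition of B (the μ_s are the distinct eigenvalues of B and the F_s the corresponding orthogonal spectral projections, with ∑_s F_s = I). If H_G(t) = exp(itA) is the transition matrix of G, then the transition matrix of the Kronecker product G × H satisfies H_{G×H}(t) = ∑_{s=1}^{q} H_G(μ_s t) ⊗ F_s for every t ∈ ℝ. -/

import Mathlib

open Matrix Complex

open scoped Kronecker

/-- If `M * P = N * P` and `N` commutes with `P`, then `M ^ n * P = N ^ n * P`. -/
private lemma pow_mul_proj {R : Type*} [Ring R] {M N P : R}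
    (h1 : M * P = N * P) (h3 : Commute N P) :
    ∀ n : ℕ, M ^ n * P = N ^ n * P := by
  intro n
  induction n with
  | zero => simp
  | succ n ih =>
      rw [pow_succ, pow_succ, mul_assoc, h1, h3.eq, ← mul_assoc, ih, mul_assoc, ← h3.eq,
        ← mul_assoc]

/-- If `M * P = N * P` and `N` commutes with `P`, then `exp M * P = exp N * P`, for matrices. -/
private lemma exp_mul_proj {m : Type*} [Fintype m] [DecidableEq m]
    {M N P : Matrix m m ℂ} (h1 : M * P = N * P) (h3 : Commute N P) :
    NormedSpace.exp M * P = NormedSpace.exp N * P := by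
  letI : SeminormedRing (Matrix m m ℂ) := Matrix.linftyOpSemiNormedRing
  letI : NormedRing (Matrix m m ℂ) := Matrix.linftyOpNormedRing
  letI : NormedAlgebra ℂ (Matrix m m ℂ) := Matrix.linftyOpNormedAlgebra
  simp only [NormedSpace.exp_eq_tsum (𝕂 := ℂ)]
  erw [← (NormedSpace.expSeries_summable' (𝕂 := ℂ) M).tsum_mul_right,
    ← (NormedSpace.expSeries_summable' (𝕂 := ℂ) N).tsum_mul_right]
  congr 1
  funext n
  rw [smul_mul_assoc, smul_mul_assoc, pow_mul_proj h1 h3 n]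

/-- `X ↦ X ⊗ₖ 1` as a ring homomorphism. -/
private def kroneckerOneHom (U V : Type*) [Fintype U] [DecidableEq U] [Fintype V]
    [DecidableEq V] : Matrix U U ℂ →+* Matrix (U × V) (U × V) ℂ where
  toFun X := X ⊗ₖ (1 : Matrix V V ℂ)
  map_one' := Matrix.one_kronecker_one
  map_mul' X Y := by rw [← Matrix.mul_kronecker_mul, mul_one]
  map_zero' := by ext ⟨i, j⟩ ⟨k, l⟩; simp [Matrix.kroneckerMap_apply]
  map_add' X Y := by ext ⟨i, j⟩ ⟨k, l⟩; simp [Matrix.kroneckerMap_apply, add_mul]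

private lemma exp_kronecker_one {U V : Type*} [Fintype U] [DecidableEq U] [Fintype V]
    [DecidableEq V] (X : Matrix U U ℂ) :
    NormedSpace.exp X ⊗ₖ (1 : Matrix V V ℂ) =
      NormedSpace.exp (X ⊗ₖ (1 : Matrix V V ℂ)) := by
  letI : SeminormedRing (Matrix U U ℂ) := Matrix.linftyOpSemiNormedRing
  letI : NormedRing (Matrix U U ℂ) := Matrix.linftyOpNormedRing
  letI : NormedAlgebra ℂ (Matrix U U ℂ) := Matrix.linftyOpNormedAlgebra
  letI : NormedAlgebra ℚ (Matrix U U ℂ) := Matrix.linftyOpNormedAlgebra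
  letI : SeminormedRing (Matrix (U × V) (U × V) ℂ) := Matrix.linftyOpSemiNormedRing
  letI : NormedRing (Matrix (U × V) (U × V) ℂ) := Matrix.linftyOpNormedRing
  letI : NormedAlgebra ℂ (Matrix (U × V) (U × V) ℂ) := Matrix.linftyOpNormedAlgebra
  have hc : Continuous (kroneckerOneHom U V) := by
    apply continuous_matrix
    rintro ⟨i, j⟩ ⟨k, l⟩
    exact ((continuous_apply_apply i k).comp continuous_id).mul continuous_const
  exact NormedSpace.map_exp (kroneckerOneHom U V) hc X

/-- Transition matrix `H(t) = exp(i t A)` of a graph with adjacency matrix `A`. -/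
noncomputable def transitionM {V : Type*} [Fintype V] [DecidableEq V]
    (A : Matrix V V ℂ) (t : ℝ) : Matrix V V ℂ :=
  NormedSpace.exp ((Complex.I * (t : ℂ)) • A)

/-- Let `G` and `H` be graphs with adjacency matrices `A` and `B`, and let
`B = ∑_{s=1}^{q} μ_s F_s` be the spectral decomposition of `B` (the `μ_s` distinct real
eigenvalues, the `F_s` the corresponding orthogonal spectral projections with `∑ F_s = I`).
If `H_G(t) = exp(itA)` is the transition matrix of `G`, then the transition matrix of the
Kronecker product `G × H` satisfies `H_{G×H}(t) = ∑ H_G(μ_s t) ⊗ F_s` for every `t ∈ ℝ`. -/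
theorem transition_kronecker {U V : Type*} [Fintype U] [DecidableEq U]
    [Fintype V] [DecidableEq V]
    (G : SimpleGraph U) [DecidableRel G.Adj] (H : SimpleGraph V) [DecidableRel H.Adj]
    {q : ℕ} (μ : Fin q → ℝ) (F : Fin q → Matrix V V ℂ)
    (hdistinct : Function.Injective μ)
    (hdecomp : H.adjMatrix ℂ = ∑ s, (μ s : ℂ) • F s)
    (hsum : ∑ s, F s = 1)
    (hproj : ∀ s, (F s).conjTranspose = F s)
    (horth : ∀ s t, F s * F t = if s = t then F s else 0)
    (t : ℝ) :
    transitionM (Matrix.kroneckerMap (· * ·) (G.adjMatrix ℂ) (H.adjMatrix ℂ)) t =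
      ∑ s, Matrix.kroneckerMap (· * ·) (transitionM (G.adjMatrix ℂ) (μ s * t)) (F s) := by
  set A := G.adjMatrix ℂ with hA
  set B := H.adjMatrix ℂ with hB
  set c : ℂ := Complex.I * (t : ℂ) with hc
  -- B * F s = μ s • F s
  have hBF : ∀ s, B * F s = (μ s : ℂ) • F s := by
    intro s
    rw [hdecomp, Finset.sum_mul]
    rw [Finset.sum_eq_single s]
    · rw [smul_mul_assoc, horth, if_pos rfl]
    · intro b _ hb
      rw [smul_mul_assoc, horth, if_neg hb, smul_zero]
    · intro hs; exact absurd (Finset.mem_univ s) hs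
  -- the projections on the product space
  set P : Fin q → Matrix (U × V) (U × V) ℂ := fun s => (1 : Matrix U U ℂ) ⊗ₖ F s with hP
  have hPsum : ∑ s, P s = 1 := by
    rw [← Matrix.one_kronecker_one (α := ℂ) (m := U) (n := V), ← hsum]
    ext ⟨i, j⟩ ⟨k, l⟩
    simp [hP, Matrix.kroneckerMap_apply, Matrix.sum_apply, Finset.mul_sum]
  set M : Matrix (U × V) (U × V) ℂ := c • (A ⊗ₖ B) with hM
  have hmain : ∀ s, NormedSpace.exp M * P s = transitionM A (μ s * t) ⊗ₖ F s := by
    intro s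
    set N : Matrix (U × V) (U × V) ℂ := (c * (μ s : ℂ)) • (A ⊗ₖ (1 : Matrix V V ℂ)) with hN
    have h1 : M * P s = N * P s := by
      simp only [hM, hN, hP, smul_mul_assoc, ← Matrix.mul_kronecker_mul, mul_one, one_mul,
        hBF s, Matrix.kronecker_smul, smul_smul]
    have h3 : Commute N (P s) := by
      simp only [Commute, SemiconjBy, hN, hP, smul_mul_assoc, mul_smul_comm,
        ← Matrix.mul_kronecker_mul, mul_one, one_mul]
    rw [exp_mul_proj h1 h3, hN]
    have hsm : (c * (μ s : ℂ)) • (A ⊗ₖ (1 : Matrix V V ℂ))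
        = ((c * (μ s : ℂ)) • A) ⊗ₖ (1 : Matrix V V ℂ) := by
      rw [Matrix.smul_kronecker]
    rw [hsm, ← exp_kronecker_one, ← Matrix.mul_kronecker_mul, one_mul]
    have harg : (c * (μ s : ℂ)) • A = (Complex.I * ((μ s * t : ℝ) : ℂ)) • A := by
      congr 1
      push_cast [hc]
      ring
    rw [harg, transitionM, mul_one]
  have : transitionM (A ⊗ₖ B) t = NormedSpace.exp M := rfl
  rw [this, ← mul_one (NormedSpace.exp M), ← hPsum, Finset.mul_sum]
  exact Finset.sum_congr rfl fun s _ => hmain s
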